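/- A finite poset P is N-free (contains no quadruple a,b,c,d with a < c, b ⋖ c, b < d and all other distinct pairs incomparable) if and only if its incomparability orthoset (P, ⊥) is Dacey. -/

import Mathlib

/-- The orthocomplement of a subset in an orthoset `(O, r)`. -/
def perp {O : Type*} (r : O → O → Prop) (X : Set O) : Set O :=
  {y | ∀ x ∈ X, r y x}

/-- Incomparability relation of a poset. -/
def incomp {P : Type*} [PartialOrder P] (x y : P) : Prop := ¬ x ≤ y ∧ ¬ y ≤ x

/-- A basis of `X` is a maximal pairwise orthogonal subset of `X`. -/
def IsBasis {O : Type*} (r : O → O → Prop) (X B : Set O) : Prop :=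
  B ⊆ X ∧ B.Pairwise r ∧ ∀ C : Set O, B ⊆ C → C ⊆ X → C.Pairwise r → C = B

/-- The orthoset is Dacey: every orthoclosed set equals the double
orthocomplement of each of its bases. -/
def IsDacey {O : Type*} (r : O → O → Prop) : Prop :=
  ∀ X : Set O, X = perp r (perp r X) →
    ∀ B : Set O, IsBasis r X B → X = perp r (perp r B)

/-- `(a,b,c,d)` form an N. -/
def FormN {P : Type*} [PartialOrder P] (a b c d : P) : Prop :=
  a < c ∧ b ⋖ c ∧ b < d ∧ incomp a b ∧ incomp a d ∧ incomp c d

section Aux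

variable {P : Type*} [PartialOrder P]

lemma incomp_symmetric : Symmetric (incomp (P := P)) := fun _ _ h => ⟨h.2, h.1⟩

lemma subset_perp_perp (X : Set P) : X ⊆ perp incomp (perp incomp X) :=
  fun x hx _ hy => incomp_symmetric (hy x hx)

lemma perp_anti {X Y : Set P} (h : X ⊆ Y) : perp incomp Y ⊆ perp incomp X :=
  fun z hz x hx => hz x (h hx)

lemma perp_perp_perp (X : Set P) :
    perp incomp (perp incomp (perp incomp X)) = perp incomp X :=
  Set.Subset.antisymm (perp_anti (subset_perp_perp X)) (subset_perp_perp _)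

/-- If an element of `X` is orthogonal to every element of a basis `B`,
it already belongs to `B`. -/
lemma insert_mem_basis {X B : Set P} (hBX : B ⊆ X) (hBp : B.Pairwise incomp)
    (hBm : ∀ C : Set P, B ⊆ C → C ⊆ X → C.Pairwise incomp → C = B)
    {z : P} (hzX : z ∈ X) (hz : ∀ b ∈ B, incomp z b) : z ∈ B := by
  have hpair : (insert z B).Pairwise incomp := by
    haveI : Std.Symm (incomp (P := P)) := ⟨fun _ _ h => incomp_symmetric h⟩
    rw [Set.pairwise_insert_of_symm]
    exact ⟨hBp, fun b hb _ => hz b hb⟩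
  have h := hBm (insert z B) (Set.subset_insert _ _)
    (Set.insert_subset_iff.mpr ⟨hzX, hBX⟩) hpair
  rw [← h]
  exact Set.mem_insert _ _

/-- Key lemma, case "below": no element of `perp B` can be strictly below an
element of `X`. -/
lemma lemA {P : Type*} [PartialOrder P] [Fintype P]
    (hN : ¬ ∃ a b c d : P, FormN a b c d)
    {X B : Set P} (hX : X = perp incomp (perp incomp X))
    (hBX : B ⊆ X) (hBp : B.Pairwise incomp)
    (hBm : ∀ C : Set P, B ⊆ C → C ⊆ X → C.Pairwise incomp → C = B)
    {y0 x0 : P} (hy0 : y0 ∈ perp incomp B) (hx0 : x0 ∈ X) (h0 : y0 < x0) : False := by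
  classical
  set S : Set P := {z | z ∈ perp incomp B ∧ ∃ x ∈ X, z < x} with hSdef
  obtain ⟨y, hyS, hymax⟩ :=
    (Set.Finite.exists_maximalFor id S (Set.toFinite S) ⟨y0, hy0, x0, hx0, h0⟩).imp fun a ha => And.intro ha.1 (fun b hb hab => le_antisymm hab (ha.2 (j := b) hb hab))
  obtain ⟨hyB, x, hx, hyx⟩ := hyS
  -- y ∉ X
  have hyX : y ∉ X := by
    intro hmem
    exact (hyB y (insert_mem_basis hBX hBp hBm hmem (fun b hb => hyB b hb))).1 le_rfl
  -- get w ∈ perp X comparable with y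
  have hyX' : ¬ ∀ w ∈ perp incomp X, incomp y w := by
    rw [hX] at hyX; exact hyX
  push_neg at hyX'
  obtain ⟨w, hw, hyw'⟩ := hyX'
  have hwx : incomp w x := hw x hx
  have hyw : y < w := by
    rcases not_and_or.mp hyw' with h | h
    · refine lt_of_le_of_ne (not_not.mp h) ?_
      rintro rfl
      exact (hw x hx).1 hyx.le
    · exact absurd ((not_not.mp h).trans hyx.le) hwx.1
  -- some element of B lies strictly below x
  have hxB : x ∉ B := fun h => (hyB x h).1 hyx.le
  have hb0 : ∃ b ∈ B, b < x := by
    by_contra hcon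
    push_neg at hcon
    apply hxB
    apply insert_mem_basis hBX hBp hBm hx
    intro b hb
    constructor
    · intro hxb; exact (hyB b hb).1 (hyx.le.trans hxb)
    · intro hbx
      rcases eq_or_lt_of_le hbx with rfl | hlt
      · exact hxB hb
      · exact hcon b hb hlt
  obtain ⟨b0, hb0B, hb0x⟩ := hb0
  -- minimal c with y < c ≤ x
  set T : Set P := {z | y < z ∧ z ≤ x} with hTdef
  obtain ⟨c, hcT, hcmin⟩ :=
    (Set.Finite.exists_minimalFor id T (Set.toFinite T) ⟨x, hyx, le_rfl⟩).imp fun a ha => And.intro ha.1 (fun b hb hba => le_antisymm (ha.2 (j := b) hb hba) hba)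
  obtain ⟨hyc, hcx⟩ := hcT
  have hcov : y ⋖ c := by
    refine ⟨hyc, fun z hz1 hz2 => ?_⟩
    have hzT : z ∈ T := ⟨hz1, hz2.le.trans hcx⟩
    exact hz2.ne' (hcmin z hzT hz2.le)
  -- c is orthogonal to B
  have hcB : c ∈ perp incomp B := by
    intro b hb
    constructor
    · intro h; exact (hyB b hb).1 (hyc.le.trans h)
    · intro h
      rcases eq_or_lt_of_le h with heq | hbc'
      · exact (hyB b hb).1 (heq ▸ hyc.le)
      · have hbw : incomp b w := incomp_symmetric (hw b (hBX hb))
        have hcw : incomp c w :=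
          ⟨fun hcw' => hbw.1 (hbc'.le.trans hcw'), fun hwc => hwx.1 (hwc.trans hcx)⟩
        exact hN ⟨b, y, c, w, hbc', hcov, hyw, incomp_symmetric (hyB b hb), hbw, hcw⟩
  -- c < x
  have hcx' : c < x := by
    rcases eq_or_lt_of_le hcx with heq | h
    · exact absurd (le_of_lt (heq ▸ hb0x)) (hcB b0 hb0B).2
    · exact h
  -- contradiction with maximality of y
  have hcS : c ∈ S := ⟨hcB, x, hx, hcx'⟩
  exact hyc.ne (hymax c hcS hyc.le)

/-- Key lemma, case "above": no element of `perp B` can be strictly above an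
element of `X`. -/
lemma lemA' {P : Type*} [PartialOrder P] [Fintype P]
    (hN : ¬ ∃ a b c d : P, FormN a b c d)
    {X B : Set P} (hX : X = perp incomp (perp incomp X))
    (hBX : B ⊆ X) (hBp : B.Pairwise incomp)
    (hBm : ∀ C : Set P, B ⊆ C → C ⊆ X → C.Pairwise incomp → C = B)
    {y0 x0 : P} (hy0 : y0 ∈ perp incomp B) (hx0 : x0 ∈ X) (h0 : x0 < y0) : False := by
  classical
  set S : Set P := {z | z ∈ perp incomp B ∧ ∃ x ∈ X, x < z} with hSdef
  obtain ⟨y, hyS, hymin⟩ :=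
    (Set.Finite.exists_minimalFor id S (Set.toFinite S) ⟨y0, hy0, x0, hx0, h0⟩).imp fun a ha => And.intro ha.1 (fun b hb hba => le_antisymm (ha.2 (j := b) hb hba) hba)
  obtain ⟨hyB, x, hx, hxy⟩ := hyS
  -- y ∉ X
  have hyX : y ∉ X := by
    intro hmem
    exact (hyB y (insert_mem_basis hBX hBp hBm hmem (fun b hb => hyB b hb))).1 le_rfl
  -- get w ∈ perp X comparable with y
  have hyX' : ¬ ∀ w ∈ perp incomp X, incomp y w := by
    rw [hX] at hyX; exact hyX
  push_neg at hyX'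
  obtain ⟨w, hw, hyw'⟩ := hyX'
  have hwx : incomp w x := hw x hx
  have hwy : w < y := by
    rcases not_and_or.mp hyw' with h | h
    · exact absurd (hxy.le.trans (not_not.mp h)) hwx.2
    · refine lt_of_le_of_ne (not_not.mp h) ?_
      rintro rfl
      exact (hw x hx).2 hxy.le
  -- some element of B lies strictly above x
  have hxB : x ∉ B := fun h => (hyB x h).2 hxy.le
  have hb0 : ∃ b ∈ B, x < b := by
    by_contra hcon
    push_neg at hcon
    apply hxB
    apply insert_mem_basis hBX hBp hBm hx
    intro b hb
    constructor
    · intro hxb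
      rcases eq_or_lt_of_le hxb with rfl | hlt
      · exact hxB hb
      · exact hcon b hb hlt
    · intro hbx; exact (hyB b hb).2 (hbx.trans hxy.le)
  obtain ⟨b0, hb0B, hb0x⟩ := hb0
  -- maximal c with x ≤ c < y
  set T : Set P := {z | z < y ∧ x ≤ z} with hTdef
  obtain ⟨c, hcT, hcmax⟩ :=
    (Set.Finite.exists_maximalFor id T (Set.toFinite T) ⟨x, hxy, le_rfl⟩).imp fun a ha => And.intro ha.1 (fun b hb hab => le_antisymm hab (ha.2 (j := b) hb hab))
  obtain ⟨hcy, hxc⟩ := hcT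
  have hcov : c ⋖ y := by
    refine ⟨hcy, fun z hz1 hz2 => ?_⟩
    have hzT : z ∈ T := ⟨hz2, hxc.trans hz1.le⟩
    exact hz1.ne (hcmax z hzT hz1.le)
  -- c is orthogonal to B
  have hcB : c ∈ perp incomp B := by
    intro b hb
    constructor
    · intro h
      rcases eq_or_lt_of_le h with heq | hbc'
      · exact (hyB b hb).2 (heq ▸ hcy.le)
      · have hbw : incomp b w := incomp_symmetric (hw b (hBX hb))
        have hcw : incomp w c :=
          ⟨fun hwc => hbw.2 (hwc.trans hbc'.le), fun hcw' => hwx.2 (hxc.trans hcw')⟩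
        exact hN ⟨w, c, y, b, hwy, hcov, hbc', hcw, hw b (hBX hb), hyB b hb⟩
    · intro h; exact (hyB b hb).2 (h.trans hcy.le)
  -- x < c
  have hcx' : x < c := by
    rcases eq_or_lt_of_le hxc with heq | h
    · exact absurd (le_of_lt (heq ▸ hb0x)) (hcB b0 hb0B).1
    · exact h
  -- contradiction with minimality of y
  have hcS : c ∈ S := ⟨hcB, x, hx, hcx'⟩
  exact hcy.ne ((hymin c hcS hcy.le).symm)

end Aux

theorem nfree_iff_dacey {P : Type*} [PartialOrder P] [Fintype P] :
    (¬ ∃ a b c d : P, FormN a b c d) ↔ IsDacey (incomp (P := P)) := by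
  constructor
  · -- N-free → Dacey
    intro hN X hX B hB
    obtain ⟨hBX, hBp, hBm⟩ := hB
    apply Set.Subset.antisymm
    · intro u hu z hz
      by_contra hcon
      rcases not_and_or.mp hcon with h | h
      · rcases eq_or_lt_of_le (not_not.mp h) with heq | hlt
        · subst heq
          exact (hz u (insert_mem_basis hBX hBp hBm hu
            (fun b hb => hz b hb))).1 le_rfl
        · exact lemA' hN hX hBX hBp hBm hz hu hlt
      · rcases eq_or_lt_of_le (not_not.mp h) with heq | hlt
        · subst heq
          exact (hz z (insert_mem_basis hBX hBp hBm hu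
            (fun b hb => hz b hb))).1 le_rfl
        · exact lemA hN hX hBX hBp hBm hz hu hlt
    · calc perp incomp (perp incomp B)
          ⊆ perp incomp (perp incomp X) := perp_anti (perp_anti hBX)
        _ = X := hX.symm
  · -- Dacey → N-free
    rintro hD ⟨a, b, c, d, hac, hbc, hbd, hab, had, hcd⟩
    have haZ : a ∈ perp incomp ({b, d} : Set P) := by
      intro x hx
      rcases hx with rfl | rfl
      · exact hab
      · exact had
    have hXoc : perp incomp (perp incomp ({b, d} : Set P)) =
        perp incomp (perp incomp (perp incomp (perp incomp ({b, d} : Set P)))) :=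
      (perp_perp_perp (perp incomp ({b, d} : Set P))).symm
    have hdX : d ∈ perp incomp (perp incomp ({b, d} : Set P)) :=
      subset_perp_perp _ (by simp)
    have hbX : b ∈ perp incomp (perp incomp ({b, d} : Set P)) :=
      subset_perp_perp _ (by simp)
    -- a basis of X containing d
    obtain ⟨B, ⟨hdB, hBX, hBp⟩, hBmax⟩ :=
      (Set.Finite.exists_maximalFor id
        {C : Set P | {d} ⊆ C ∧ C ⊆ perp incomp (perp incomp ({b, d} : Set P)) ∧
          C.Pairwise incomp}
        (Set.toFinite _)
        ⟨{d}, le_rfl, Set.singleton_subset_iff.mpr hdX, Set.pairwise_singleton _ _⟩).imp fun a ha => And.intro ha.1 (fun b hb hab => le_antisymm hab (ha.2 (j := b) hb hab))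
    have hdB' : d ∈ B := hdB rfl
    have hXB := hD _ hXoc B
      ⟨hBX, hBp, fun C hBC hCX hCp => (hBmax C ⟨hdB.trans hBC, hCX, hCp⟩ hBC).symm⟩
    -- c is orthogonal to B
    have hcB : c ∈ perp incomp B := by
      intro u hu
      have hua : incomp u a := (hBX hu) a haZ
      constructor
      · intro hcu; exact hua.2 (hac.le.trans hcu)
      · intro huc
        have hult : u < c := lt_of_le_of_ne huc (by rintro rfl; exact hua.2 hac.le)
        by_cases h1 : u ≤ b
        · rcases eq_or_lt_of_le h1 with heq | hub
          · subst heq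
            exact (hBp hu hdB' hbd.ne).1 hbd.le
          · have hne : u ≠ d := by rintro rfl; exact hcd.2 hult.le
            exact (hBp hu hdB' hne).1 (hub.le.trans hbd.le)
        · by_cases h2 : b ≤ u
          · exact hbc.2 (lt_of_le_of_ne h2 (fun heq => h1 heq.ge)) hult
          · have huZ : u ∈ perp incomp ({b, d} : Set P) := by
              intro x hx
              rcases hx with rfl | rfl
              · exact ⟨h1, h2⟩
              · have hne : u ≠ x := by rintro rfl; exact hcd.2 hult.le
                exact hBp hu hdB' hne
            exact ((hBX hu) u huZ).1 le_rfl
    rw [hXB] at hbX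
    exact (hbX c hcB).1 hbc.lt.le
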